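/- (Carlson-type interpolation) For a measurable function g on ℝ^d and ε > 0, there is a constant C depending only on d and ε such that ∫√|g| ≤ C (∫|g|)^{ε/(2(ε+d))} · (∫ ‖x‖^{d+ε}|g(x)| dx)^{d/(2(ε+d))}, whenever both integrals on the right are finite. -/

import Mathlib

open MeasureTheory

private lemma carlson_am_gm {u v t : ℝ} (hu : 0 ≤ u) (hv : 0 ≤ v) (ht : 0 < t) :
    Real.sqrt (u * v) ≤ (t * u + v / t) / 2 := by
  have h1 : (t * u) * (v / t) = u * v := by field_simp
  have h2 : Real.sqrt (u * v) = Real.sqrt (t * u) * Real.sqrt (v / t) := by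
    rw [← h1, Real.sqrt_mul (by positivity)]
  nlinarith [sq_nonneg (Real.sqrt (t * u) - Real.sqrt (v / t)),
    Real.sq_sqrt (show (0:ℝ) ≤ t * u by positivity),
    Real.sq_sqrt (show (0:ℝ) ≤ v / t by positivity)]

private lemma carlson_min_max {a : ℝ} (ha : 0 < a) : min 1 a⁻¹ * max 1 a = 1 := by
  rcases le_total a 1 with h | h
  · rw [max_eq_left h, min_eq_left (one_le_inv_iff₀.mpr ⟨ha, h⟩ : (1:ℝ) ≤ a⁻¹)]; ring
  · rw [max_eq_right h, min_eq_right (inv_le_one_of_one_le₀ h)]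
    exact inv_mul_cancel₀ ha.ne'

set_option maxHeartbeats 2000000 in
theorem carlson_main (d : ℕ) (ε : ℝ) (hε : 0 < ε) (hdpos : 0 < d) :
    ∃ C : ℝ, 0 < C ∧ ∀ g : (Fin d → ℝ) → ℝ,
      Integrable g →
      Integrable (fun x => ‖x‖ ^ ((d : ℝ) + ε) * |g x|) →
      (∫ x, Real.sqrt |g x|) ≤
        C * (∫ x, |g x|) ^ (ε / (2 * (ε + d))) *
          (∫ x, ‖x‖ ^ ((d : ℝ) + ε) * |g x|) ^ ((d : ℝ) / (2 * (ε + d))) := by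
  have hdc : (0:ℝ) ≤ (d:ℝ) := Nat.cast_nonneg d
  set s : ℝ := (d : ℝ) + ε with hs_def
  have hs : 0 < s := by rw [hs_def]; linarith
  have hsne : s ≠ 0 := hs.ne'
  have hfin : Module.finrank ℝ (Fin d → ℝ) = d := by
    simp [Module.finrank_fintype_fun_eq_card]
  -- the profile function
  set w1 : (Fin d → ℝ) → ℝ := fun y => min 1 (‖y‖ ^ (-s)) with hw1_def
  have hw1_meas : Measurable w1 := by rw [hw1_def]; fun_prop
  have hw1_nonneg : ∀ y, 0 ≤ w1 y := fun y =>
    le_min one_pos.le (Real.rpow_nonneg (norm_nonneg _) _)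
  have hw1_int : Integrable w1 := by
    refine ((integrable_one_add_norm (μ := (volume : Measure (Fin d → ℝ))) (r := s)
        (by rw [hfin]; linarith)).const_mul ((2:ℝ)^(s:ℝ))).mono'
        hw1_meas.aestronglyMeasurable (Filter.Eventually.of_forall fun y => ?_)
    rw [Real.norm_eq_abs, abs_of_nonneg (hw1_nonneg y)]
    rcases le_total (‖y‖ : ℝ) 1 with h | h
    · have h2 : (2:ℝ)^(-s) ≤ (1+‖y‖)^(-s) :=
        Real.rpow_le_rpow_of_nonpos (by positivity) (by linarith) (by linarith)
      have h3 : (1:ℝ) = 2^(s:ℝ) * 2^(-s) := by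
        rw [← Real.rpow_add two_pos]; simp
      calc w1 y ≤ 1 := min_le_left _ _
        _ = 2^(s:ℝ) * 2^(-s) := h3
        _ ≤ 2^(s:ℝ) * (1+‖y‖)^(-s) := by
            apply mul_le_mul_of_nonneg_left h2 (by positivity)
    · have hy : (0:ℝ) < ‖y‖ := lt_of_lt_of_le one_pos h
      have h2 : (1+‖y‖) ≤ 2*‖y‖ := by linarith
      have h3 : ((2:ℝ)*‖y‖)^(-s) = 2^(-s) * ‖y‖^(-s) :=
        Real.mul_rpow (by norm_num) (norm_nonneg _)
      have h4 : ((2:ℝ)*‖y‖)^(-s) ≤ (1+‖y‖)^(-s) :=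
        Real.rpow_le_rpow_of_nonpos (by positivity) h2 (by linarith)
      calc w1 y ≤ ‖y‖^(-s) := min_le_right _ _
        _ = 2^(s:ℝ) * (2^(-s) * ‖y‖^(-s)) := by
            rw [← mul_assoc, ← Real.rpow_add two_pos]; simp
        _ = 2^(s:ℝ) * ((2:ℝ)*‖y‖)^(-s) := by rw [h3]
        _ ≤ 2^(s:ℝ) * (1+‖y‖)^(-s) := by
            apply mul_le_mul_of_nonneg_left h4 (by positivity)
  set W1 : ℝ := ∫ y, w1 y with hW1_def
  have hW1pos : 0 < W1 := by
    rw [hW1_def, integral_pos_iff_support_of_nonneg hw1_nonneg hw1_int]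
    have hsub : ({(0:Fin d → ℝ)}ᶜ : Set _) ⊆ Function.support w1 := by
      intro y hy
      have hy0 : y ≠ 0 := hy
      have hn : 0 < ‖y‖ := norm_pos_iff.mpr hy0
      exact (lt_min one_pos (Real.rpow_pos_of_pos hn _)).ne'
    have hne : Set.Nonempty ({(0:Fin d → ℝ)}ᶜ : Set _) := by
      refine ⟨fun _ => 1, fun hmem => ?_⟩
      have := congrFun (Set.mem_singleton_iff.mp hmem) ⟨0, hdpos⟩
      norm_num at this
    exact lt_of_lt_of_le (isOpen_compl_singleton.measure_pos volume hne) (measure_mono hsub)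
  haveI : Nonempty (Fin d) := ⟨⟨0, hdpos⟩⟩
  have hzero_ae : ∀ᵐ x : Fin d → ℝ, x ≠ (0 : Fin d → ℝ) := by
    rw [ae_iff]
    have hset : {x : Fin d → ℝ | ¬ x ≠ 0} = {0} := by ext x; simp
    rw [hset]
    exact measure_singleton 0
  refine ⟨Real.sqrt (2 * W1), Real.sqrt_pos.mpr (by linarith), fun g hg hB => ?_⟩
  set A : ℝ := ∫ x, |g x| with hA_def
  set B : ℝ := ∫ x, ‖x‖ ^ (s:ℝ) * |g x| with hB_def
  have hA0 : 0 ≤ A := integral_nonneg fun x => abs_nonneg _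
  have hB0 : 0 ≤ B := integral_nonneg fun x =>
    mul_nonneg (Real.rpow_nonneg (norm_nonneg _) _) (abs_nonneg _)
  have he1pos : 0 < ε / (2 * (ε + d)) := by
    apply div_pos hε; linarith
  rcases eq_or_lt_of_le hA0 with hA | hApos
  · -- A = 0
    have hg0 : g =ᵐ[volume] 0 := by
      have h := (integral_eq_zero_iff_of_nonneg (fun x => abs_nonneg (g x)) hg.abs).mp hA.symm
      filter_upwards [h] with x hx
      simpa [abs_eq_zero] using hx
    have hL : (∫ x, Real.sqrt |g x|) = 0 := by
      have h : (fun x => Real.sqrt |g x|) =ᵐ[volume] (fun _ => (0:ℝ)) := by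
        filter_upwards [hg0] with x hx
        simp [hx]
      rw [integral_congr_ae h, integral_zero]
    rw [hL, ← hA, Real.zero_rpow he1pos.ne']
    simp
  rcases eq_or_lt_of_le hB0 with hBz | hBpos
  · -- B = 0, contradiction with A > 0
    exfalso
    have h := (integral_eq_zero_iff_of_nonneg
      (fun x => mul_nonneg (Real.rpow_nonneg (norm_nonneg _) _) (abs_nonneg _)) hB).mp hBz.symm
    have hg0 : g =ᵐ[volume] 0 := by
      filter_upwards [h, hzero_ae] with x hx hxne
      have hn : 0 < ‖x‖ := norm_pos_iff.mpr hxne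
      have hne : ‖x‖ ^ (s:ℝ) ≠ 0 := (Real.rpow_pos_of_pos hn _).ne'
      have : ‖x‖ ^ (s:ℝ) * |g x| = 0 := hx
      rcases mul_eq_zero.mp this with h' | h'
      · exact absurd h' hne
      · simpa [abs_eq_zero] using h'
    have : A = 0 := by
      rw [hA_def, integral_congr_ae (show (fun x => |g x|) =ᵐ[volume] (fun _ => (0:ℝ)) by
        filter_upwards [hg0] with x hx; simp [hx]), integral_zero]
    linarith
  -- Main case: A > 0, B > 0
  set R : ℝ := (B / A) ^ ((1:ℝ)/s) with hR_def
  have hRpos : 0 < R := Real.rpow_pos_of_pos (div_pos hBpos hApos) _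
  have hRd : (0:ℝ) < R ^ d := pow_pos hRpos d
  set P : ℝ := W1 * R ^ d with hP_def
  have hPpos : 0 < P := mul_pos hW1pos hRd
  set t : ℝ := Real.sqrt (2 * A) / Real.sqrt P with ht_def
  have htpos : 0 < t :=
    div_pos (Real.sqrt_pos.mpr (by linarith)) (Real.sqrt_pos.mpr hPpos)
  set w : (Fin d → ℝ) → ℝ := fun x => w1 (R⁻¹ • x) with hw_def
  set v : (Fin d → ℝ) → ℝ := fun x => max 1 ((‖x‖ / R) ^ (s:ℝ)) * |g x| with hv_def
  have hw_nonneg : ∀ x, 0 ≤ w x := fun x => hw1_nonneg _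
  have hv_nonneg : ∀ x, 0 ≤ v x := fun x =>
    mul_nonneg (le_trans zero_le_one (le_max_left _ _)) (abs_nonneg _)
  have hw_int : Integrable w := hw1_int.comp_smul (inv_ne_zero hRpos.ne')
  have hv_meas : AEStronglyMeasurable v volume := by
    apply AEStronglyMeasurable.mul ?_ hg.abs.1
    exact (Measurable.aestronglyMeasurable (by fun_prop))
  have hmaj_int : Integrable (fun x => |g x| + R^(-s) * (‖x‖^(s:ℝ) * |g x|)) :=
    hg.abs.add (hB.const_mul _)
  have hv_le : ∀ x, v x ≤ |g x| + R^(-s) * (‖x‖^(s:ℝ) * |g x|) := by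
    intro x
    have hdiv : (‖x‖ / R) ^ (s:ℝ) = R^(-s) * ‖x‖^(s:ℝ) := by
      rw [Real.div_rpow (norm_nonneg _) hRpos.le, Real.rpow_neg hRpos.le, div_eq_inv_mul]
    have h1 : max 1 ((‖x‖/R)^(s:ℝ)) ≤ 1 + (‖x‖/R)^(s:ℝ) :=
      max_le (le_add_of_nonneg_right (Real.rpow_nonneg (by positivity) _))
        (le_add_of_nonneg_left zero_le_one)
    calc v x ≤ (1 + (‖x‖/R)^(s:ℝ)) * |g x| := mul_le_mul_of_nonneg_right h1 (abs_nonneg _)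
      _ = |g x| + R^(-s) * (‖x‖^(s:ℝ) * |g x|) := by rw [hdiv]; ring
  have hv_int : Integrable v := by
    refine hmaj_int.mono' hv_meas (Filter.Eventually.of_forall fun x => ?_)
    rw [Real.norm_eq_abs, abs_of_nonneg (hv_nonneg x)]
    exact hv_le x
  -- a.e. pointwise bound
  have hpt : ∀ᵐ x : Fin d → ℝ, Real.sqrt |g x| ≤ (t * w x + v x / t) / 2 := by
    filter_upwards [hzero_ae] with x hx
    have hnx : 0 < ‖x‖ := norm_pos_iff.mpr hx
    have ha : 0 < (‖x‖ / R) ^ (s:ℝ) := Real.rpow_pos_of_pos (div_pos hnx hRpos) _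
    have hwx : w x = min 1 (((‖x‖ / R)^(s:ℝ))⁻¹) := by
      have h1 : ‖R⁻¹ • x‖ = ‖x‖ / R := by
        rw [norm_smul, Real.norm_eq_abs, abs_of_pos (inv_pos.mpr hRpos)]
        ring
      show min 1 (‖R⁻¹ • x‖ ^ (-s)) = min 1 (((‖x‖ / R)^(s:ℝ))⁻¹)
      rw [h1, Real.rpow_neg (div_nonneg (norm_nonneg _) hRpos.le)]
    have key : w x * v x = |g x| := by
      rw [hwx, hv_def, ← mul_assoc, carlson_min_max ha, one_mul]
    calc Real.sqrt |g x| = Real.sqrt (w x * v x) := by rw [key]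
      _ ≤ (t * w x + v x / t) / 2 := carlson_am_gm (hw_nonneg x) (hv_nonneg x) htpos
  have hs_meas : AEStronglyMeasurable (fun x : Fin d → ℝ => Real.sqrt |g x|) volume :=
    Real.continuous_sqrt.comp_aestronglyMeasurable hg.abs.1
  have hsum_int : Integrable (fun x => (t * w x + v x / t) / 2) :=
    ((hw_int.const_mul t).add (hv_int.div_const t)).div_const 2
  have hsqrt_int : Integrable (fun x : Fin d → ℝ => Real.sqrt |g x|) := by
    refine hsum_int.mono' hs_meas ?_
    filter_upwards [hpt] with x hx
    rw [Real.norm_eq_abs, abs_of_nonneg (Real.sqrt_nonneg _)]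
    exact hx
  have hle1 : (∫ x, Real.sqrt |g x|) ≤ (t * (∫ x, w x) + (∫ x, v x) / t) / 2 := by
    calc (∫ x, Real.sqrt |g x|) ≤ ∫ x, (t * w x + v x / t) / 2 :=
          integral_mono_ae hsqrt_int hsum_int hpt
      _ = (t * (∫ x, w x) + (∫ x, v x) / t) / 2 := by
          rw [integral_div, integral_add (hw_int.const_mul t) (hv_int.div_const t),
            integral_const_mul, integral_div]
  have hWR : (∫ x, w x) = R ^ d * W1 := by
    have h := Measure.integral_comp_inv_smul_of_nonneg (volume : Measure (Fin d → ℝ)) w1 hRpos.le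
    rw [hfin] at h
    show (∫ x, w1 (R⁻¹ • x)) = R ^ d * W1
    rw [h, smul_eq_mul, hW1_def]
  have hRs : R^(-s) * B = A := by
    have h1 : R^(-s) = ((B/A) ^ ((1:ℝ)/s)) ^ (-s) := by rw [hR_def]
    have h2 : ((B/A) ^ ((1:ℝ)/s)) ^ (-s) = (B/A) ^ (((1:ℝ)/s) * (-s)) :=
      (Real.rpow_mul (div_nonneg hB0 hA0) _ _).symm
    have h3 : ((1:ℝ)/s) * (-s) = -1 := by field_simp
    rw [h1, h2, h3, Real.rpow_neg_one, inv_div]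
    field_simp
  have hVle : (∫ x, v x) ≤ 2 * A := by
    have h1 : (∫ x, v x) ≤ ∫ x, (|g x| + R^(-s) * (‖x‖^(s:ℝ) * |g x|)) :=
      integral_mono hv_int hmaj_int hv_le
    have h2 : (∫ x, (|g x| + R^(-s) * (‖x‖^(s:ℝ) * |g x|))) = A + R^(-s) * B := by
      rw [integral_add hg.abs (hB.const_mul _), integral_const_mul]
    rw [h2, hRs] at h1
    linarith
  have hle2 : (∫ x, Real.sqrt |g x|) ≤ (t * P + (2*A) / t) / 2 := by
    refine le_trans hle1 ?_
    have h1 : t * (∫ x, w x) = t * P := by rw [hWR, hP_def]; ring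
    have h2 : (∫ x, v x) / t ≤ (2*A) / t := by
      exact div_le_div_of_nonneg_right hVle htpos.le
    rw [hWR, ← hP_def] at *
    linarith [h2]
  have hap : 0 < Real.sqrt (2*A) := Real.sqrt_pos.mpr (by linarith)
  have hpp : 0 < Real.sqrt P := Real.sqrt_pos.mpr hPpos
  have heq1 : t * P = Real.sqrt (2*A) * Real.sqrt P := by
    rw [ht_def, div_mul_eq_mul_div, mul_div_assoc, Real.div_sqrt]
  have heq2 : (2*A) / t = Real.sqrt (2*A) * Real.sqrt P := by
    rw [ht_def, div_div_eq_mul_div,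
      ← Real.mul_self_sqrt (show (0:ℝ) ≤ 2*A by linarith)]
    field_simp [hap.ne']
    rw [Real.sqrt_sq (Real.sqrt_nonneg _)]
  have heq : (t * P + (2*A) / t) / 2 = Real.sqrt (2*A) * Real.sqrt P := by
    rw [heq1, heq2]; ring
  have hne1 : ((d:ℝ) + ε) ≠ 0 := ne_of_gt (by linarith)
  have hne2 : (ε + (d:ℝ)) ≠ 0 := ne_of_gt (by linarith)
  have hsum : ε/s + (d:ℝ)/s = 1 := by
    rw [← add_div, hs_def, add_comm ε ((d:ℝ))]
    exact div_self hne1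
  have hARd : A * R ^ d = A ^ (ε/s) * B ^ ((d:ℝ)/s) := by
    have hRd_eq : (R:ℝ) ^ d = (B/A) ^ ((d:ℝ)/s) := by
      rw [hR_def, ← Real.rpow_natCast ((B/A) ^ ((1:ℝ)/s)) d,
        ← Real.rpow_mul (div_nonneg hB0 hA0)]
      congr 1
      field_simp
    have hApow : A ^ (ε/s) = A / A ^ ((d:ℝ)/s) := by
      rw [show ε/s = 1 - (d:ℝ)/s by linarith [hsum], Real.rpow_sub hApos, Real.rpow_one]
    rw [hRd_eq, Real.div_rpow hB0 hA0, hApow]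
    have hne3 : A ^ ((d:ℝ)/s) ≠ 0 := (Real.rpow_pos_of_pos hApos _).ne'
    field_simp
  have h2s : 2*(ε+(d:ℝ)) = 2*s := by rw [hs_def]; ring
  have hexp1 : ε/s * (1/2) = ε / (2*(ε+(d:ℝ))) := by
    rw [h2s, div_mul_div_comm, mul_one, mul_comm s 2]
  have hexp2 : (d:ℝ)/s * (1/2) = (d:ℝ) / (2*(ε+(d:ℝ))) := by
    rw [h2s, div_mul_div_comm, mul_one, mul_comm s 2]
  have hfinal : Real.sqrt (2*A) * Real.sqrt P =
      Real.sqrt (2*W1) * A ^ (ε / (2*(ε+(d:ℝ)))) * B ^ ((d:ℝ) / (2*(ε+(d:ℝ)))) := by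
    have h1 : 2*A*P = (2*W1) * (A ^ (ε/s) * B ^ ((d:ℝ)/s)) := by
      rw [hP_def, ← hARd]; ring
    calc Real.sqrt (2*A) * Real.sqrt P = Real.sqrt (2*A*P) :=
          (Real.sqrt_mul (by linarith) _).symm
      _ = Real.sqrt ((2*W1) * (A ^ (ε/s) * B ^ ((d:ℝ)/s))) := by rw [h1]
      _ = Real.sqrt (2*W1) * (Real.sqrt (A ^ (ε/s)) * Real.sqrt (B ^ ((d:ℝ)/s))) := by
          rw [Real.sqrt_mul (by linarith), Real.sqrt_mul (Real.rpow_nonneg hA0 _)]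
      _ = Real.sqrt (2*W1) * A ^ (ε / (2*(ε+(d:ℝ)))) * B ^ ((d:ℝ) / (2*(ε+(d:ℝ)))) := by
          rw [Real.sqrt_eq_rpow (A ^ (ε/s)), Real.sqrt_eq_rpow (B ^ ((d:ℝ)/s)),
            ← Real.rpow_mul hA0, ← Real.rpow_mul hB0, hexp1, hexp2]
          ring
  calc (∫ x, Real.sqrt |g x|) ≤ (t*P + (2*A)/t)/2 := hle2
    _ = Real.sqrt (2*A) * Real.sqrt P := heq
    _ = Real.sqrt (2*W1) * A ^ (ε / (2*(ε+(d:ℝ)))) * B ^ ((d:ℝ) / (2*(ε+(d:ℝ)))) := hfinal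

/-- Carlson-type interpolation inequality: there is a constant `C = C(d, ε)`
such that `∫√|g| ≤ C (∫|g|)^{ε/(2(ε+d))} (∫‖x‖^{d+ε}|g(x)|dx)^{d/(2(ε+d))}`. -/
theorem carlson_interpolation (d : ℕ) (ε : ℝ) (hε : 0 < ε) :
    ∃ C : ℝ, 0 < C ∧ ∀ g : (Fin d → ℝ) → ℝ,
      Integrable g →
      Integrable (fun x => ‖x‖ ^ ((d : ℝ) + ε) * |g x|) →
      (∫ x, Real.sqrt |g x|) ≤
        C * (∫ x, |g x|) ^ (ε / (2 * (ε + d))) *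
          (∫ x, ‖x‖ ^ ((d : ℝ) + ε) * |g x|) ^ ((d : ℝ) / (2 * (ε + d))) := by
  rcases Nat.eq_zero_or_pos d with hd0 | hdpos
  · -- dimension 0 case
    subst hd0
    refine ⟨1, one_pos, fun g hg hB => ?_⟩
    have hBf : (fun x : Fin 0 → ℝ => ‖x‖ ^ ((0:ℕ) + ε : ℝ) * |g x|) = fun _ => 0 := by
      funext x
      have hx : x = 0 := Subsingleton.elim x 0
      rw [hx, norm_zero, Real.zero_rpow (by push_cast; linarith), zero_mul]
    have hvol : (volume (Set.univ : Set (Fin 0 → ℝ))).toReal = 1 := by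
      simp [MeasureTheory.volume_pi, Measure.pi_univ]
    rw [hBf]
    rw [integral_unique (μ := volume) (fun x => Real.sqrt |g x|),
        integral_unique (μ := volume) (fun x => |g x|),
        integral_unique (μ := volume) (fun _ : Fin 0 → ℝ => (0:ℝ))]
    rw [measureReal_def, hvol]
    simp only [smul_eq_mul, one_mul]
    have he0 : ((0:ℕ):ℝ) / (2 * (ε + (0:ℕ))) = 0 := by norm_num
    have he1 : ε / (2 * (ε + (0:ℕ))) = 1/2 := by
      push_cast; rw [add_zero]; field_simp
    rw [he0, he1, Real.rpow_zero, mul_one, Real.sqrt_eq_rpow]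
  · exact carlson_main d ε hε hdpos
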